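/- Let C be a linear [n,k] code over F_q satisfying the chain condition, with generalized Hamming weight hierarchy d_1 < d_2 < ... < d_k (and d_0 = 0). Then the covering radius of C satisfies R(C) ≤ n − Σ_{r=1}^{k} ⌈(d_r − d_{r−1})/q⌉; that is, for every v ∈ F_q^n there exists a codeword c ∈ C with Hamming distance d_H(v, c) ≤ n − Σ_{r=1}^{k} ⌈(d_r − d_{r−1})/q⌉. -/

import Mathlib

/-- The covering radius of a linear code `C ⊆ F^ι`: the minimal `r` such that every
vector is within Hamming distance `r` of some codeword. -/
noncomputable def covRad (F : Type*) [Field F] [DecidableEq F] {ι : Type*} [Fintype ι]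
    (C : Submodule F (ι → F)) : ℕ :=
  sInf { r | ∀ v : ι → F, ∃ c ∈ C, hammingDist v c ≤ r }

/-- The `r`-th generalized Hamming weight of a linear code: the minimal support size
of an `r`-dimensional subcode. -/
noncomputable def GHW (F : Type*) [Field F] {ι : Type*} (C : Submodule F (ι → F))
    (r : ℕ) : ℕ :=
  sInf { w | ∃ D : Submodule F (ι → F), D ≤ C ∧ Module.finrank F D = r ∧
    { i | ∃ x ∈ D, x i ≠ 0 }.ncard = w }

lemma pigeon {α β : Type*} [DecidableEq α] [Fintype β] [DecidableEq β] {q : ℕ}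
    (hq : Fintype.card β = q) (hq0 : 0 < q) (s : Finset α) (g : α → β) :
    ∃ a : β, (s.card + q - 1) / q ≤ (s.filter fun i => g i = a).card := by
  have hne : Nonempty β := Fintype.card_pos_iff.mp (hq ▸ hq0)
  by_contra h
  push_neg at h
  set A := (s.card + q - 1) / q with hA
  have hsum : s.card = ∑ a : β, (s.filter fun i => g i = a).card :=
    Finset.card_eq_sum_card_fiberwise (fun x _ => Finset.mem_univ (g x))
  have hA1 : 1 ≤ A := by have := h (Classical.arbitrary β); omega
  have hle : ∑ a : β, (s.filter fun i => g i = a).card ≤ ∑ _a : β, (A - 1) :=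
    Finset.sum_le_sum fun a _ => Nat.le_pred_of_lt (h a)
  rw [Finset.sum_const, Finset.card_univ, hq, smul_eq_mul] at hle
  have h2 : A * q ≤ s.card + q - 1 := Nat.div_mul_le_self _ _
  have h3 : q * (A - 1) + q = q * A := by
    conv_rhs => rw [← Nat.sub_add_cancel hA1]
    ring
  have h4 : q * A = A * q := mul_comm _ _
  generalize q * (A - 1) = Cc at hle h3
  generalize A * q = B at h2 h4
  omega

/-- For a chained `[n,k]` code over `F_q` with GHW hierarchy `d 1 < ⋯ < d k` (and `d 0 = 0`),
the covering radius is at most `n − Σ_{r=1}^{k} ⌈(d r − d (r−1))/q⌉`; that is, every vector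
of `F_q^n` is within that Hamming distance of a codeword. -/
theorem stmt1 {F : Type*} [Field F] [Fintype F] [DecidableEq F] {q n k : ℕ}
    (hq : Fintype.card F = q)
    (C : Submodule F (Fin n → F)) (hdim : Module.finrank F C = k)
    (d : ℕ → ℕ) (hd0 : d 0 = 0)
    (hGHW : ∀ r, 1 ≤ r → r ≤ k → d r = GHW F C r)
    (hmono : ∀ r, 1 ≤ r → r < k → d r < d (r + 1))
    (hchain : ∃ c : Fin k → (Fin n → F), LinearIndependent F c ∧ (∀ i, c i ∈ C) ∧
      ∀ r : Fin k, { i | ∃ j ≤ r, c j i ≠ 0 }.ncard = d (r.1 + 1)) :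
    covRad F C ≤ n - ∑ r ∈ Finset.Icc 1 k, (d r - d (r - 1) + q - 1) / q ∧
    ∀ v : Fin n → F, ∃ c ∈ C,
      hammingDist v c ≤ n - ∑ r ∈ Finset.Icc 1 k, (d r - d (r - 1) + q - 1) / q := by
  classical
  obtain ⟨c, -, hcC, hcsupp⟩ := hchain
  have hq0 : 0 < q := hq ▸ Fintype.card_pos
  -- the growing supports
  set T : ℕ → Set (Fin n) := fun m => {i | ∃ j : Fin k, j.1 < m ∧ c j i ≠ 0} with hT
  have hTmono : ∀ {a b : ℕ}, a ≤ b → T a ⊆ T b := by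
    rintro a b hab i ⟨j, hj, h⟩; exact ⟨j, lt_of_lt_of_le hj hab, h⟩
  have hVanish : ∀ (j : Fin k) (i : Fin n), i ∉ T (j.1 + 1) → c j i = 0 := by
    intro j i hi
    by_contra h
    exact hi ⟨j, Nat.lt_succ_self _, h⟩
  have hTcard : ∀ m, m ≤ k → (T m).ncard = d m := by
    intro m hm
    match m with
    | 0 =>
      have : T 0 = ∅ := by
        ext i; simp only [hT, Set.mem_setOf_eq, Set.mem_empty_iff_false, iff_false]
        rintro ⟨j, hj, -⟩; omega
      rw [this, Set.ncard_empty, hd0]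
    | (m' + 1) =>
      have hr : m' < k := hm
      have := hcsupp ⟨m', hr⟩
      have hset : {i | ∃ j ≤ (⟨m', hr⟩ : Fin k), c j i ≠ 0} = T (m' + 1) := by
        ext i
        simp only [hT, Set.mem_setOf_eq]
        constructor
        · rintro ⟨j, hj, h⟩
          have h2 : j.1 ≤ m' := Fin.le_def.mp hj
          exact ⟨j, by omega, h⟩
        · rintro ⟨j, hj, h⟩
          exact ⟨j, Fin.le_def.mpr (show j.1 ≤ m' by omega), h⟩
      rw [hset] at this
      exact this
  have hScard : ∀ m, m < k → (T (m + 1) \ T m).ncard = d (m + 1) - d m := by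
    intro m hm
    rw [Set.ncard_diff (hTmono (Nat.le_succ m)) (Set.toFinite _),
      hTcard m (le_of_lt hm), hTcard (m + 1) hm]
  -- main statement, proved for each vector v
  have hmain : ∀ v : Fin n → F, ∃ w ∈ C,
      hammingDist v w ≤ n - ∑ r ∈ Finset.Icc 1 k, (d r - d (r - 1) + q - 1) / q := by
    intro v
    -- downward induction on coefficients
    have key : ∀ t : ℕ, ∃ w ∈ C,
        ∑ r ∈ Finset.Ico (k - t) k, (d (r + 1) - d r + q - 1) / q ≤
          ({i | w i = v i} ∩ (T k \ T (k - t))).ncard := by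
      intro t
      induction t with
      | zero =>
        refine ⟨0, C.zero_mem, ?_⟩
        simp
      | succ t ih =>
        obtain ⟨w, hwC, hw⟩ := ih
        by_cases hkt : k - t = 0
        · have heq : k - (t + 1) = k - t := by omega
          rw [heq]; exact ⟨w, hwC, hw⟩
        · set m := k - (t + 1) with hmdef
          have hm1 : m + 1 = k - t := by omega
          have hmk : m < k := by omega
          set jm : Fin k := ⟨m, hmk⟩ with hjm
          set S : Set (Fin n) := T (m + 1) \ T m with hS
          have hcm : ∀ i ∈ S, c jm i ≠ 0 := by
            rintro i ⟨hi1, hi2⟩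
            obtain ⟨j, hj, hcj⟩ := hi1
            have hjem : j.1 = m := by
              by_contra hne
              exact hi2 ⟨j, by omega, hcj⟩
            have : j = jm := Fin.ext hjem
            rwa [← this]
          have hSfin : S.Finite := Set.toFinite _
          set g : Fin n → F := fun i => (v i - w i) / (c jm i) with hg
          obtain ⟨a, ha⟩ := pigeon hq hq0 hSfin.toFinset g
          set w' : Fin n → F := w + a • c jm with hw'
          have hw'C : w' ∈ C := C.add_mem hwC (C.smul_mem a (hcC jm))
          refine ⟨w', hw'C, ?_⟩
          -- identify the pigeonhole fiber with the agreement set on S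
          have hfib : {i | w' i = v i} ∩ S = ↑(hSfin.toFinset.filter fun i => g i = a) := by
            ext i
            simp only [Set.mem_inter_iff, Set.mem_setOf_eq, Finset.coe_filter,
              Set.Finite.mem_toFinset]
            have hiff : ∀ i ∈ S, ((v i - w i) / c jm i = a ↔ w i + a * c jm i = v i) := by
              intro i hiS
              have hc0 := hcm i hiS
              rw [div_eq_iff hc0]
              constructor <;> intro h <;> linear_combination -h
            constructor
            · rintro ⟨hvi, hiS⟩
              exact ⟨hiS, (hiff i hiS).mpr hvi⟩
            · rintro ⟨hiS, hga⟩
              exact ⟨(hiff i hiS).mp hga, hiS⟩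
          -- splitting the region
          have hwm : ∀ i, i ∉ T (m + 1) → w' i = w i := by
            intro i hi
            have : c jm i = 0 := hVanish jm i hi
            show w i + a * c jm i = w i
            rw [this]; ring
          have hsplit : {i | w' i = v i} ∩ (T k \ T m) =
              ({i | w' i = v i} ∩ S) ∪ ({i | w i = v i} ∩ (T k \ T (m + 1))) := by
            ext i
            simp only [Set.mem_inter_iff, Set.mem_setOf_eq, Set.mem_diff, Set.mem_union, hS]
            constructor
            · rintro ⟨hvi, hTk, hTm⟩
              by_cases h1 : i ∈ T (m + 1)
              · exact Or.inl ⟨hvi, h1, hTm⟩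
              · exact Or.inr ⟨(hwm i h1) ▸ hvi, hTk, h1⟩
            · rintro (⟨hvi, h1, hTm⟩ | ⟨hvi, hTk, h1⟩)
              · exact ⟨hvi, hTmono hmk h1, hTm⟩
              · exact ⟨(hwm i h1).symm ▸ hvi, hTk, fun hTm => h1 (hTmono (Nat.le_succ m) hTm)⟩
          have hdisj : Disjoint ({i | w' i = v i} ∩ S) ({i | w i = v i} ∩ (T k \ T (m + 1))) := by
            rw [Set.disjoint_left]
            rintro i ⟨-, hi1, -⟩ ⟨-, -, hi2⟩
            exact hi2 hi1
          rw [hsplit, Set.ncard_union_eq hdisj (Set.toFinite _) (Set.toFinite _)]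
          rw [← hm1] at hw
          rw [Finset.sum_eq_sum_Ico_succ_bot hmk]
          apply Nat.add_le_add
          · -- pigeonhole bound on S
            have hcard : hSfin.toFinset.card = d (m + 1) - d m := by
              rw [← Set.ncard_eq_toFinset_card S hSfin]
              exact hScard m hmk
            rw [hfib, Set.ncard_coe_finset]
            rw [hcard] at ha
            exact ha
          · exact hw
    obtain ⟨w, hwC, hw⟩ := key k
    refine ⟨w, hwC, ?_⟩
    have hsub : {i | w i = v i} ∩ (T k \ T (k - k)) ⊆ {i | w i = v i} :=
      Set.inter_subset_left
    have hagree : ∑ r ∈ Finset.Ico (k - k) k, (d (r + 1) - d r + q - 1) / q ≤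
        ({i : Fin n | w i = v i}).ncard :=
      le_trans hw (Set.ncard_le_ncard hsub (Set.toFinite _))
    rw [Nat.sub_self] at hagree
    -- reindex the sum
    have hreindex : ∑ r ∈ Finset.Icc 1 k, (d r - d (r - 1) + q - 1) / q =
        ∑ r ∈ Finset.Ico 0 k, (d (r + 1) - d r + q - 1) / q := by
      rw [← Finset.Ico_add_one_right_eq_Icc, Finset.sum_Ico_eq_sum_range, Finset.sum_Ico_eq_sum_range]
      simp only [Nat.add_sub_cancel, Nat.sub_zero, Nat.zero_add]
      apply Finset.sum_congr rfl
      intro i _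
      rw [Nat.add_comm 1 i, Nat.add_sub_cancel]
    -- relate hammingDist to complements
    have hcompl : ({i : Fin n | w i = v i}).ncard + ({i : Fin n | v i ≠ w i}).ncard = n := by
      have h1 : ({i : Fin n | w i = v i})ᶜ = {i : Fin n | v i ≠ w i} := by
        ext i; simp [eq_comm]
      have := Set.ncard_add_ncard_compl ({i : Fin n | w i = v i})
      rw [h1] at this
      rw [this]
      simp [Nat.card_eq_fintype_card]
    have hdist : hammingDist v w = ({i : Fin n | v i ≠ w i}).ncard := by
      rw [hammingDist]
      rw [← Set.ncard_coe_finset]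
      congr 1
      ext i
      simp
    rw [hreindex]
    omega
  refine ⟨?_, hmain⟩
  exact Nat.sInf_le hmain
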